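/- Let B be a bicategory and W a class of arrows satisfying [WB1]–[WB5], and let Ŵ be its closure under composition and invertible 2-cells. Then W is weakly initial in Ŵ: for every w ∈ Ŵ there exists an arrow u such that w ∘ u ∈ W. -/

import Mathlib

open CategoryTheory Bicategory

universe w v u

/-- A class of 1-morphisms in a bicategory. -/
def WClass (B : Type u) [Bicategory.{w, v} B] :=
  ∀ ⦃a b : B⦄, (a ⟶ b) → Prop

namespace WClass

variable {B : Type u} [Bicategory.{w, v} B]

/-- [WB1]: all identities are in `W`. -/
def WB1 (W : WClass B) : Prop := ∀ a : B, W (𝟙 a)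

/-- [WB2]: for composable arrows of `W` there is a pre-composition landing in `W`. -/
def WB2 (W : WClass B) : Prop :=
  ∀ ⦃a b c : B⦄ (vm : a ⟶ b) (wm : b ⟶ c), W vm → W wm →
    ∃ (a' : B) (u : a' ⟶ a), W (u ≫ vm ≫ wm)

/-- [WB3]: squares with invertible fillers over cospans with one leg in `W`. -/
def WB3 (W : WClass B) : Prop :=
  ∀ ⦃a b c : B⦄ (wm : a ⟶ b) (f : c ⟶ b), W wm →
    ∃ (d : B) (h : d ⟶ a) (vm : d ⟶ c), W vm ∧ Nonempty (h ≫ wm ≅ vm ≫ f)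

/-- `β` is a lifting of the 2-cell `η : f ≫ wm ⟶ g ≫ wm` along `wm`, via `u`. -/
def IsLift ⦃a b c : B⦄ (f g : a ⟶ b) (wm : b ⟶ c) (η : f ≫ wm ⟶ g ≫ wm)
    ⦃a' : B⦄ (u : a' ⟶ a) (β : u ≫ f ⟶ u ≫ g) : Prop :=
  β ▷ wm = (α_ u f wm).hom ≫ u ◁ η ≫ (α_ u g wm).inv

/-- [WB4]: existence of liftings of 2-cells along arrows of `W`, together with
the compatibility of any two such liftings. -/
def WB4 (W : WClass B) : Prop :=
  (∀ ⦃a b c : B⦄ (f g : a ⟶ b) (wm : b ⟶ c), W wm → ∀ η : f ≫ wm ⟶ g ≫ wm,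
    ∃ (a' : B) (u : a' ⟶ a), W u ∧ ∃ β : u ≫ f ⟶ u ≫ g, IsLift f g wm η u β) ∧
  (∀ ⦃a b c : B⦄ (f g : a ⟶ b) (wm : b ⟶ c), W wm → ∀ η : f ≫ wm ⟶ g ≫ wm,
    ∀ ⦃a₁ : B⦄ (u₁ : a₁ ⟶ a) (β₁ : u₁ ≫ f ⟶ u₁ ≫ g), W u₁ → IsLift f g wm η u₁ β₁ →
      ∀ ⦃a₂ : B⦄ (u₂ : a₂ ⟶ a) (β₂ : u₂ ≫ f ⟶ u₂ ≫ g), W u₂ → IsLift f g wm η u₂ β₂ →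
        ∃ (d : B) (s : d ⟶ a₁) (t : d ⟶ a₂), W (s ≫ u₁) ∧ W (t ≫ u₂) ∧
          ∃ θ : s ≫ u₁ ≅ t ≫ u₂,
            ((α_ s u₁ f).hom ≫ s ◁ β₁ ≫ (α_ s u₁ g).inv) ≫ θ.hom ▷ g =
              θ.hom ▷ f ≫ (α_ t u₂ f).hom ≫ t ◁ β₂ ≫ (α_ t u₂ g).inv)

/-- [WB5]: `W` is closed under invertible 2-cells. -/
def WB5 (W : WClass B) : Prop :=
  ∀ ⦃a b : B⦄ (vm wm : a ⟶ b), W wm → Nonempty (vm ≅ wm) → W vm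

end WClass

/-- The closure of a class of 1-morphisms under composition and invertible 2-cells. -/
inductive WClass.Hat {B : Type u} [Bicategory.{w, v} B] (W : WClass B) :
    ∀ ⦃a b : B⦄, (a ⟶ b) → Prop
  | of {a b : B} {f : a ⟶ b} : W f → WClass.Hat W f
  | comp {a b c : B} {f : a ⟶ b} {g : b ⟶ c} :
      WClass.Hat W f → WClass.Hat W g → WClass.Hat W (f ≫ g)
  | iso {a b : B} {f g : a ⟶ b} : WClass.Hat W f → (g ≅ f) → WClass.Hat W g

/-- The closure `Ŵ` regarded as a class of 1-morphisms. -/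
def WClass.hat {B : Type u} [Bicategory.{w, v} B] (W : WClass B) : WClass B :=
  fun _ _ f => WClass.Hat W f

theorem statement7 {B : Type u} [Bicategory.{w, v} B] (W : WClass B)
    (h1 : W.WB1) (h2 : W.WB2) (h3 : W.WB3) (h4 : W.WB4) (h5 : W.WB5)
    ⦃a b : B⦄ (f : a ⟶ b) (hf : W.hat f) :
    ∃ (c : B) (u : c ⟶ a), W (u ≫ f) := by
  induction hf with
  | @of a b f hfW =>
      exact ⟨a, 𝟙 a, h5 _ f hfW ⟨λ_ f⟩⟩
  | @comp a b c f g _ _ ihf ihg =>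
      obtain ⟨c0, u, hu⟩ := ihf
      obtain ⟨c1, u', hu'⟩ := ihg
      obtain ⟨d, hm, vm, hvm, ⟨φ⟩⟩ := h3 (u ≫ f) u' hu
      obtain ⟨e, u'', hu''⟩ := h2 vm (u' ≫ g) hvm hu'
      refine ⟨e, u'' ≫ hm ≫ u, h5 _ _ hu'' ⟨?_⟩⟩
      calc (u'' ≫ hm ≫ u) ≫ f ≫ g
          ≅ u'' ≫ (hm ≫ u) ≫ f ≫ g := α_ u'' (hm ≫ u) (f ≫ g)
        _ ≅ u'' ≫ hm ≫ u ≫ f ≫ g := whiskerLeftIso u'' (α_ hm u (f ≫ g))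
        _ ≅ u'' ≫ hm ≫ (u ≫ f) ≫ g :=
            whiskerLeftIso u'' (whiskerLeftIso hm (α_ u f g).symm)
        _ ≅ u'' ≫ (hm ≫ u ≫ f) ≫ g := whiskerLeftIso u'' (α_ hm (u ≫ f) g).symm
        _ ≅ u'' ≫ (vm ≫ u') ≫ g := whiskerLeftIso u'' (whiskerRightIso φ g)
        _ ≅ u'' ≫ vm ≫ u' ≫ g := whiskerLeftIso u'' (α_ vm u' g)
  | @iso a b f g _ φ ih =>
      obtain ⟨c0, u, hu⟩ := ih
      exact ⟨c0, u, h5 _ _ hu ⟨whiskerLeftIso u φ⟩⟩
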